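/- Let A = {u, v, w} and B = {x, y, z} be the triangles of Example 2 (six points on the unit circle with clockwise order u, x, y, v, w, z, both triangles containing the origin, and the diameter through w crossing the circle strictly between u and x). After performing the unique feasible symmetric exchange, obtaining A' = {u, y, w} and B' = {x, v, z}, the only symmetric exchange (a, b) with a ∈ A', b ∈ B' such that both (A' \ {a}) ∪ {b} and (B' \ {b}) ∪ {a} are 0-embracing is again (y, v). Consequently, the pair (A, B) cannot be transformed into (B, A) by any sequence of symmetric exchanges preserving 0-embracingness at every step. -/
import Mathlib


/-- The point of the unit circle in the plane at angle `θ` (measured counterclockwise). -/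
noncomputable def circlePt (θ : ℝ) : ℝ × ℝ := (Real.cos θ, Real.sin θ)



lemma circlePt_sub_two_pi (θ : ℝ) : circlePt (θ - 2 * Real.pi) = circlePt θ := by
  simp [circlePt, Real.cos_sub_two_pi, Real.sin_sub_two_pi]

lemma circlePt_add_two_pi (θ : ℝ) : circlePt (θ + 2 * Real.pi) = circlePt θ := by
  simp [circlePt, Real.cos_add_two_pi, Real.sin_add_two_pi]

lemma circlePt_ne {θ1 θ2 : ℝ} (h1 : θ1 ≠ θ2) (h2 : |θ1 - θ2| < 2 * Real.pi) :
    circlePt θ1 ≠ circlePt θ2 := by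
  intro h
  have hc : Real.cos θ1 = Real.cos θ2 := congrArg Prod.fst h
  have hs : Real.sin θ1 = Real.sin θ2 := congrArg Prod.snd h
  have hone : Real.cos (θ1 - θ2) = 1 := by
    rw [Real.cos_sub, hc, hs]
    have := Real.sin_sq_add_cos_sq θ2
    nlinarith
  rw [abs_lt] at h2
  have := (Real.cos_eq_one_iff_of_lt_of_lt (by linarith) (by linarith)).1 hone
  exact h1 (by linarith)

lemma isLinMap (c s : ℝ) : IsLinearMap ℝ (fun p : ℝ × ℝ => c * p.1 + s * p.2) := by
  constructor
  · intro p q; simp [Prod.fst_add, Prod.snd_add]; ring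
  · intro t p; simp [Prod.smul_fst, Prod.smul_snd, smul_eq_mul]; ring

lemma halfplane_not_mem (φ : ℝ) (s : Set (ℝ × ℝ))
    (h : ∀ p ∈ s, 0 < Real.cos φ * p.1 + Real.sin φ * p.2) :
    (0 : ℝ × ℝ) ∉ convexHull ℝ s := by
  intro h0
  have h2 := convexHull_min h (convex_halfSpace_gt (isLinMap (Real.cos φ) (Real.sin φ)) 0) h0
  have h3 : (0:ℝ) < Real.cos φ * (0:ℝ×ℝ).1 + Real.sin φ * (0:ℝ×ℝ).2 := h2
  simp at h3

lemma halfplane_not_interior (φ : ℝ) (s : Set (ℝ × ℝ))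
    (h : ∀ p ∈ s, 0 ≤ Real.cos φ * p.1 + Real.sin φ * p.2) :
    (0 : ℝ × ℝ) ∉ interior (convexHull ℝ s) := by
  intro h0
  obtain ⟨ε, hε, hball⟩ := Metric.mem_nhds_iff.1 (mem_interior_iff_mem_nhds.1 h0)
  set p : ℝ × ℝ := (-(ε/2) * Real.cos φ, -(ε/2) * Real.sin φ) with hp
  have hpmem : p ∈ Metric.ball (0:ℝ×ℝ) ε := by
    rw [Metric.mem_ball, dist_zero_right, Prod.norm_def]
    simp only [Real.norm_eq_abs, hp]
    rw [abs_mul, abs_mul]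
    have h1 := Real.abs_cos_le_one φ
    have h2 := Real.abs_sin_le_one φ
    have h3 : |(-(ε/2))| = ε/2 := by rw [abs_neg, abs_of_pos]; linarith
    rw [h3]
    apply max_lt <;> nlinarith
  have hsub : convexHull ℝ s ⊆ {q : ℝ × ℝ | 0 ≤ Real.cos φ * q.1 + Real.sin φ * q.2} :=
    convexHull_min h (convex_halfSpace_ge (isLinMap (Real.cos φ) (Real.sin φ)) 0)
  have hmem := hsub (hball hpmem)
  simp only [Set.mem_setOf_eq, hp] at hmem
  nlinarith [Real.sin_sq_add_cos_sq φ]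

lemma cos_combo_pos {φ θ : ℝ} (hl : -(Real.pi/2) < θ - φ) (hr : θ - φ < Real.pi/2) :
    0 < Real.cos φ * (circlePt θ).1 + Real.sin φ * (circlePt θ).2 := by
  have : Real.cos φ * (circlePt θ).1 + Real.sin φ * (circlePt θ).2 = Real.cos (θ - φ) := by
    simp [circlePt, Real.cos_sub]; ring
  rw [this]
  exact Real.cos_pos_of_mem_Ioo ⟨hl, hr⟩

lemma cos_combo_nonneg {φ θ : ℝ} (hl : -(Real.pi/2) ≤ θ - φ) (hr : θ - φ ≤ Real.pi/2) :
    0 ≤ Real.cos φ * (circlePt θ).1 + Real.sin φ * (circlePt θ).2 := by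
  have : Real.cos φ * (circlePt θ).1 + Real.sin φ * (circlePt θ).2 = Real.cos (θ - φ) := by
    simp [circlePt, Real.cos_sub]; ring
  rw [this]
  exact Real.cos_nonneg_of_mem_Icc ⟨hl, hr⟩

lemma elim_case (lo hi θ1 θ2 θ3 : ℝ) (hlen : hi - lo < Real.pi)
    (h1l : lo ≤ θ1) (h1r : θ1 ≤ hi) (h2l : lo ≤ θ2) (h2r : θ2 ≤ hi)
    (h3l : lo ≤ θ3) (h3r : θ3 ≤ hi)
    {s : Set (ℝ × ℝ)} (hs : s ⊆ {circlePt θ1, circlePt θ2, circlePt θ3})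
    (h0 : (0 : ℝ × ℝ) ∈ convexHull ℝ s) : False := by
  apply halfplane_not_mem ((lo + hi)/2) _ _ (convexHull_mono hs h0)
  rintro p (rfl | rfl | rfl) <;>
    exact cos_combo_pos (by linarith) (by linarith)

lemma interior_case (lo hi θ1 θ2 θ3 : ℝ) (hlen : hi - lo ≤ Real.pi)
    (h1l : lo ≤ θ1) (h1r : θ1 ≤ hi) (h2l : lo ≤ θ2) (h2r : θ2 ≤ hi)
    (h3l : lo ≤ θ3) (h3r : θ3 ≤ hi)
    {s : Set (ℝ × ℝ)} (hs : s ⊆ {circlePt θ1, circlePt θ2, circlePt θ3})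
    (h0 : (0 : ℝ × ℝ) ∈ interior (convexHull ℝ s)) : False := by
  apply halfplane_not_interior ((lo + hi)/2) _ _
    (interior_mono (convexHull_mono hs) h0 : _)
  rintro p (rfl | rfl | rfl) <;>
    exact cos_combo_nonneg (by linarith) (by linarith)

lemma idf1 {X : Type*} (b x y z : X) :
    insert b (({x, y, z} : Set X) \ {x}) ⊆ {b, y, z} := by
  intro p hp
  simp only [Set.mem_insert_iff, Set.mem_diff, Set.mem_singleton_iff] at hp ⊢
  rcases hp with rfl | ⟨rfl | rfl | rfl, hne⟩
  · exact Or.inl rfl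
  · exact absurd rfl hne
  · exact Or.inr (Or.inl rfl)
  · exact Or.inr (Or.inr rfl)

lemma idf2 {X : Type*} (b x y z : X) :
    insert b (({x, y, z} : Set X) \ {y}) ⊆ {b, x, z} := by
  intro p hp
  simp only [Set.mem_insert_iff, Set.mem_diff, Set.mem_singleton_iff] at hp ⊢
  rcases hp with rfl | ⟨rfl | rfl | rfl, hne⟩
  · exact Or.inl rfl
  · exact Or.inr (Or.inl rfl)
  · exact absurd rfl hne
  · exact Or.inr (Or.inr rfl)

lemma idf3 {X : Type*} (b x y z : X) :
    insert b (({x, y, z} : Set X) \ {z}) ⊆ {b, x, y} := by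
  intro p hp
  simp only [Set.mem_insert_iff, Set.mem_diff, Set.mem_singleton_iff] at hp ⊢
  rcases hp with rfl | ⟨rfl | rfl | rfl, hne⟩
  · exact Or.inl rfl
  · exact Or.inr (Or.inl rfl)
  · exact Or.inr (Or.inr rfl)
  · exact absurd rfl hne

lemma insert_mid {X : Type*} (b x y z : X) (hx : x ≠ y) (hz : z ≠ y) :
    insert b (({x, y, z} : Set X) \ {y}) = {b, x, z} := by
  ext p
  simp only [Set.mem_insert_iff, Set.mem_diff, Set.mem_singleton_iff]
  constructor
  · rintro (rfl | ⟨rfl | rfl | rfl, hne⟩)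
    · exact Or.inl rfl
    · exact Or.inr (Or.inl rfl)
    · exact absurd rfl hne
    · exact Or.inr (Or.inr rfl)
  · rintro (rfl | rfl | rfl)
    · exact Or.inl rfl
    · exact Or.inr ⟨Or.inl rfl, hx⟩
    · exact Or.inr ⟨Or.inr (Or.inr rfl), hz⟩

lemma uniq_A'B' (au ax ay av aw az : ℝ)
    (h1 : ax < au) (h2 : ay < ax) (h3 : av < ay) (h4 : aw < av) (h5 : az < aw)
    (h6 : au - 2 * Real.pi < az) (hd1 : ax < aw + Real.pi) (hd2 : aw + Real.pi < au)
    (huv : au - av < Real.pi) (hyz : ay - az < Real.pi) :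
    ∀ a ∈ ({circlePt au, circlePt ay, circlePt aw} : Set (ℝ × ℝ)),
    ∀ b ∈ ({circlePt ax, circlePt av, circlePt az} : Set (ℝ × ℝ)),
      (0 : ℝ × ℝ) ∈ convexHull ℝ
        (insert b (({circlePt au, circlePt ay, circlePt aw} : Set (ℝ × ℝ)) \ {a})) →
      (0 : ℝ × ℝ) ∈ convexHull ℝ
        (insert a (({circlePt ax, circlePt av, circlePt az} : Set (ℝ × ℝ)) \ {b})) →
      a = circlePt ay ∧ b = circlePt av := by
  have hpi := Real.pi_pos
  intro a ha b hb hfa hfb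
  simp only [Set.mem_insert_iff, Set.mem_singleton_iff] at ha hb
  rcases ha with rfl | rfl | rfl <;> rcases hb with rfl | rfl | rfl
  · -- (u, x)
    exact (elim_case aw ax ax ay aw (by linarith) (by linarith)
      (by linarith) (by linarith) (by linarith) (by linarith) (by linarith)
      (idf1 _ _ _ _) hfa).elim
  · -- (u, v)
    exact (elim_case aw ay av ay aw (by linarith) (by linarith)
      (by linarith) (by linarith) (by linarith) (by linarith) (by linarith)
      (idf1 _ _ _ _) hfa).elim
  · -- (u, z)
    exact (elim_case az ay az ay aw (by linarith) (by linarith)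
      (by linarith) (by linarith) (by linarith) (by linarith) (by linarith)
      (idf1 _ _ _ _) hfa).elim
  · -- (y, x)
    exact (elim_case az ay ay av az (by linarith) (by linarith)
      (by linarith) (by linarith) (by linarith) (by linarith) (by linarith)
      (idf1 _ _ _ _) hfb).elim
  · -- (y, v) : the good case
    exact ⟨rfl, rfl⟩
  · -- (y, z)
    rw [show circlePt au = circlePt (au - 2*Real.pi) from (circlePt_sub_two_pi au).symm]
      at hfa
    exact (elim_case (au - 2*Real.pi) aw az (au - 2*Real.pi) aw
      (by linarith) (by linarith) (by linarith) (by linarith) (by linarith)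
      (by linarith) (by linarith) (idf2 _ _ _ _) hfa).elim
  · -- (w, x)
    exact (elim_case az av aw av az (by linarith) (by linarith)
      (by linarith) (by linarith) (by linarith) (by linarith) (by linarith)
      (idf1 _ _ _ _) hfb).elim
  · -- (w, v)
    exact (elim_case av au av au ay (by linarith) (by linarith)
      (by linarith) (by linarith) (by linarith) (by linarith) (by linarith)
      (idf3 _ _ _ _) hfa).elim
  · -- (w, z)
    exact (elim_case aw ax aw ax av (by linarith) (by linarith)
      (by linarith) (by linarith) (by linarith) (by linarith) (by linarith)
      (idf3 _ _ _ _) hfb).elim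

lemma uniq_AB (au ax ay av aw az : ℝ)
    (h1 : ax < au) (h2 : ay < ax) (h3 : av < ay) (h4 : aw < av) (h5 : az < aw)
    (h6 : au - 2 * Real.pi < az) (hd1 : ax < aw + Real.pi) (hd2 : aw + Real.pi < au)
    (huv : au - av < Real.pi) (hyz : ay - az < Real.pi) :
    ∀ a ∈ ({circlePt au, circlePt av, circlePt aw} : Set (ℝ × ℝ)),
    ∀ b ∈ ({circlePt ax, circlePt ay, circlePt az} : Set (ℝ × ℝ)),
      (0 : ℝ × ℝ) ∈ convexHull ℝ
        (insert b (({circlePt au, circlePt av, circlePt aw} : Set (ℝ × ℝ)) \ {a})) →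
      (0 : ℝ × ℝ) ∈ convexHull ℝ
        (insert a (({circlePt ax, circlePt ay, circlePt az} : Set (ℝ × ℝ)) \ {b})) →
      a = circlePt av ∧ b = circlePt ay := by
  have hpi := Real.pi_pos
  intro a ha b hb hfa hfb
  simp only [Set.mem_insert_iff, Set.mem_singleton_iff] at ha hb
  rcases ha with rfl | rfl | rfl <;> rcases hb with rfl | rfl | rfl
  · -- (u, x)
    exact (elim_case aw ax ax av aw (by linarith) (by linarith)
      (by linarith) (by linarith) (by linarith) (by linarith) (by linarith)
      (idf1 _ _ _ _) hfa).elim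
  · -- (u, y)
    exact (elim_case aw ay ay av aw (by linarith) (by linarith)
      (by linarith) (by linarith) (by linarith) (by linarith) (by linarith)
      (idf1 _ _ _ _) hfa).elim
  · -- (u, z)
    exact (elim_case az av az av aw (by linarith) (by linarith)
      (by linarith) (by linarith) (by linarith) (by linarith) (by linarith)
      (idf1 _ _ _ _) hfa).elim
  · -- (v, x)
    exact (elim_case az ay av ay az (by linarith) (by linarith)
      (by linarith) (by linarith) (by linarith) (by linarith) (by linarith)
      (idf1 _ _ _ _) hfb).elim
  · -- (v, y) : the good case
    exact ⟨rfl, rfl⟩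
  · -- (v, z)
    rw [show circlePt au = circlePt (au - 2*Real.pi) from (circlePt_sub_two_pi au).symm]
      at hfa
    exact (elim_case (au - 2*Real.pi) aw az (au - 2*Real.pi) aw
      (by linarith) (by linarith) (by linarith) (by linarith) (by linarith)
      (by linarith) (by linarith) (idf2 _ _ _ _) hfa).elim
  · -- (w, x)
    exact (elim_case az ay aw ay az (by linarith) (by linarith)
      (by linarith) (by linarith) (by linarith) (by linarith) (by linarith)
      (idf1 _ _ _ _) hfb).elim
  · -- (w, y)
    exact (elim_case av au ay au av (by linarith) (by linarith)
      (by linarith) (by linarith) (by linarith) (by linarith) (by linarith)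
      (idf3 _ _ _ _) hfa).elim
  · -- (w, z)
    exact (elim_case aw ax aw ax ay (by linarith) (by linarith)
      (by linarith) (by linarith) (by linarith) (by linarith) (by linarith)
      (idf3 _ _ _ _) hfb).elim

/-- **Example 2, continued.** In the configuration of Example 2 (six points
on the unit circle in clockwise order `u, x, y, v, w, z`, both triangles containing the
origin, the diameter through `w` crossing the circle strictly between `u` and `x`), after
performing the unique feasible symmetric exchange, which yields `A' = {u, y, w}` and
`B' = {x, v, z}`, the only symmetric exchange `(a, b)` with `a ∈ A'`, `b ∈ B'` keeping both
triangles `0`-embracing is again `(y, v)`. Consequently, `(A, B)` cannot be transformed into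
`(B, A)` by any sequence of symmetric exchanges preserving `0`-embracingness at every
step. -/
theorem no_symmetric_exchange_swap (au ax ay av aw az : ℝ)
    (h1 : ax < au) (h2 : ay < ax) (h3 : av < ay) (h4 : aw < av) (h5 : az < aw)
    (h6 : au - 2 * Real.pi < az)
    (hdiam : ax < aw + Real.pi ∧ aw + Real.pi < au)
    (A B A' B' : Set (ℝ × ℝ))
    (hA : A = {circlePt au, circlePt av, circlePt aw})
    (hB : B = {circlePt ax, circlePt ay, circlePt az})
    (hA' : A' = {circlePt au, circlePt ay, circlePt aw})
    (hB' : B' = {circlePt ax, circlePt av, circlePt az})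
    (h0A : (0 : ℝ × ℝ) ∈ interior (convexHull ℝ A))
    (h0B : (0 : ℝ × ℝ) ∈ interior (convexHull ℝ B)) :
    (∀ a ∈ A', ∀ b ∈ B',
      (0 : ℝ × ℝ) ∈ convexHull ℝ (insert b (A' \ {a})) →
      (0 : ℝ × ℝ) ∈ convexHull ℝ (insert a (B' \ {b})) →
      a = circlePt ay ∧ b = circlePt av) ∧
    ¬ ∃ (N : ℕ) (f g : ℕ → Set (ℝ × ℝ)),
        f 0 = A ∧ g 0 = B ∧ f N = B ∧ g N = A ∧
        ∀ i < N, ∃ a ∈ f i, ∃ b ∈ g i,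
          f (i + 1) = insert b (f i \ {a}) ∧ g (i + 1) = insert a (g i \ {b}) ∧
          (0 : ℝ × ℝ) ∈ convexHull ℝ (f (i + 1)) ∧
          (0 : ℝ × ℝ) ∈ convexHull ℝ (g (i + 1)) := by
  obtain ⟨hd1, hd2⟩ := hdiam
  have hpi := Real.pi_pos
  have huv : au - av < Real.pi := by
    by_contra hcon
    push_neg at hcon
    rw [hA, show circlePt au = circlePt (au - 2*Real.pi) from
      (circlePt_sub_two_pi au).symm] at h0A
    exact interior_case (au - 2*Real.pi) av (au - 2*Real.pi) av aw
      (by linarith) (by linarith) (by linarith) (by linarith) (by linarith)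
      (by linarith) (by linarith) subset_rfl h0A
  have hyz : ay - az < Real.pi := by
    by_contra hcon
    push_neg at hcon
    rw [hB, show circlePt az = circlePt (az + 2*Real.pi) from
      (circlePt_add_two_pi az).symm] at h0B
    exact interior_case ay (az + 2*Real.pi) ax ay (az + 2*Real.pi)
      (by linarith) (by linarith) (by linarith) (by linarith) (by linarith)
      (by linarith) (by linarith) subset_rfl h0B
  have PNE : ∀ θ1 θ2 : ℝ, θ2 < θ1 → θ1 - θ2 < 2*Real.pi → circlePt θ1 ≠ circlePt θ2 :=
    fun θ1 θ2 hlt hlt2 =>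
      circlePt_ne (by linarith) (by rw [abs_lt]; constructor <;> linarith)
  have nuv : circlePt au ≠ circlePt av := PNE au av (by linarith) (by linarith)
  have nwv : circlePt aw ≠ circlePt av := (PNE av aw (by linarith) (by linarith)).symm
  have nuy : circlePt au ≠ circlePt ay := PNE au ay (by linarith) (by linarith)
  have nwy : circlePt aw ≠ circlePt ay := (PNE ay aw (by linarith) (by linarith)).symm
  have nxy : circlePt ax ≠ circlePt ay := PNE ax ay (by linarith) (by linarith)
  have nzy : circlePt az ≠ circlePt ay := (PNE ay az (by linarith) (by linarith)).symm
  have nxv : circlePt ax ≠ circlePt av := PNE ax av (by linarith) (by linarith)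
  have nzv : circlePt az ≠ circlePt av := (PNE av az (by linarith) (by linarith)).symm
  have nux : circlePt au ≠ circlePt ax := PNE au ax (by linarith) (by linarith)
  have nuz : circlePt au ≠ circlePt az := PNE au az (by linarith) (by linarith)
  have E2 : ∀ a ∈ A', ∀ b ∈ B',
      (0 : ℝ × ℝ) ∈ convexHull ℝ (insert b (A' \ {a})) →
      (0 : ℝ × ℝ) ∈ convexHull ℝ (insert a (B' \ {b})) →
      a = circlePt ay ∧ b = circlePt av := by
    rw [hA', hB']
    exact uniq_A'B' au ax ay av aw az h1 h2 h3 h4 h5 h6 hd1 hd2 huv hyz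
  have E1 : ∀ a ∈ A, ∀ b ∈ B,
      (0 : ℝ × ℝ) ∈ convexHull ℝ (insert b (A \ {a})) →
      (0 : ℝ × ℝ) ∈ convexHull ℝ (insert a (B \ {b})) →
      a = circlePt av ∧ b = circlePt ay := by
    rw [hA, hB]
    exact uniq_AB au ax ay av aw az h1 h2 h3 h4 h5 h6 hd1 hd2 huv hyz
  have S1 : insert (circlePt ay) (A \ {circlePt av}) = A' := by
    rw [hA, hA', insert_mid _ _ _ _ nuv nwv, Set.insert_comm]
  have S2 : insert (circlePt av) (B \ {circlePt ay}) = B' := by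
    rw [hB, hB', insert_mid _ _ _ _ nxy nzy, Set.insert_comm]
  have S3 : insert (circlePt av) (A' \ {circlePt ay}) = A := by
    rw [hA, hA', insert_mid _ _ _ _ nuy nwy, Set.insert_comm]
  have S4 : insert (circlePt ay) (B' \ {circlePt av}) = B := by
    rw [hB, hB', insert_mid _ _ _ _ nxv nzv, Set.insert_comm]
  refine ⟨E2, ?_⟩
  rintro ⟨N, f, g, hf0, hg0, hfN, hgN, hstep⟩
  have key : ∀ i, i ≤ N → (f i = A ∧ g i = B) ∨ (f i = A' ∧ g i = B') := by
    intro i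
    induction i with
    | zero => intro _; exact Or.inl ⟨hf0, hg0⟩
    | succ n ih =>
      intro hn
      obtain ⟨a, ha, b, hb, hf', hg', h0f, h0g⟩ := hstep n (by omega)
      rcases ih (by omega) with ⟨hfa, hga⟩ | ⟨hfa, hga⟩
      · rw [hfa] at ha hf'
        rw [hga] at hb hg'
        obtain ⟨rfl, rfl⟩ := E1 a ha b hb (hf' ▸ h0f) (hg' ▸ h0g)
        exact Or.inr ⟨by rw [hf', S1], by rw [hg', S2]⟩
      · rw [hfa] at ha hf'
        rw [hga] at hb hg'
        obtain ⟨rfl, rfl⟩ := E2 a ha b hb (hf' ▸ h0f) (hg' ▸ h0g)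
        exact Or.inl ⟨by rw [hf', S3], by rw [hg', S4]⟩
  have humem : circlePt au ∉ B := by
    rw [hB]
    simp only [Set.mem_insert_iff, Set.mem_singleton_iff]
    push_neg
    exact ⟨nux, nuy, nuz⟩
  rcases key N le_rfl with ⟨hfa, _⟩ | ⟨hfa, _⟩
  · rw [hfN] at hfa
    exact humem (hfa ▸ (hA ▸ Set.mem_insert _ _ : circlePt au ∈ A))
  · rw [hfN] at hfa
    exact humem (hfa ▸ (hA' ▸ Set.mem_insert _ _ : circlePt au ∈ A'))
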